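/- Let X₁, X₂ be real random variables in L² and let F be an event such that X₁ and X₂·1_F are independent. Then Cov(X₁, X₂) = Cov(X₁, X₂ 1_{F^c}), and if moreover X₂ ∈ L⁴ then |Cov(X₁, X₂)| ≤ √Var(X₁) · (E[X₂⁴])^{1/4} · P(F^c)^{1/4}. -/

import Mathlib

open MeasureTheory ProbabilityTheory

lemma aux_one_div_two : (1 : ENNReal)/1 = 1/2 + 1/2 := by
  rw [ENNReal.add_halves, div_one]

lemma aux_half_quarters : (1 : ENNReal)/2 = 1/4 + 1/4 := by
  have h : ((2:ENNReal)*2)⁻¹ = 2⁻¹*2⁻¹ :=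
    ENNReal.mul_inv (Or.inl (by norm_num)) (Or.inl (by norm_num))
  rw [show (1:ENNReal)/4 = (1/2)/2 by
    simp only [div_eq_mul_inv, one_mul, ← h]; norm_num, ENNReal.add_halves]


/-- If `X₁, X₂ ∈ L²` and `X₁` is independent of `X₂·1_F`, then
`Cov(X₁, X₂) = Cov(X₁, X₂ 1_{Fᶜ})`, and if moreover `X₂ ∈ L⁴` then
`|Cov(X₁,X₂)| ≤ √Var(X₁) · (E[X₂⁴])^{1/4} · P(Fᶜ)^{1/4}`. -/
theorem covariance_indicator_bound {Ω : Type*} [MeasurableSpace Ω]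
    (μ : Measure Ω) [IsProbabilityMeasure μ]
    (X₁ X₂ : Ω → ℝ) (F : Set Ω) (hF : MeasurableSet F)
    (h1 : MemLp X₁ 2 μ) (h2 : MemLp X₂ 2 μ)
    (hindep : IndepFun X₁ (F.indicator X₂) μ) :
    ((∫ ω, X₁ ω * X₂ ω ∂μ) - (∫ ω, X₁ ω ∂μ) * (∫ ω, X₂ ω ∂μ)
        = (∫ ω, X₁ ω * Fᶜ.indicator X₂ ω ∂μ)
          - (∫ ω, X₁ ω ∂μ) * (∫ ω, Fᶜ.indicator X₂ ω ∂μ)) ∧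
    (MemLp X₂ 4 μ →
      |(∫ ω, X₁ ω * X₂ ω ∂μ) - (∫ ω, X₁ ω ∂μ) * (∫ ω, X₂ ω ∂μ)|
        ≤ Real.sqrt (variance X₁ μ) * (∫ ω, (X₂ ω) ^ 4 ∂μ) ^ ((1 : ℝ) / 4)
            * ((μ Fᶜ).toReal) ^ ((1 : ℝ) / 4)) := by
  set Y : Ω → ℝ := F.indicator X₂ with hYdef
  set Z : Ω → ℝ := Fᶜ.indicator X₂ with hZdef
  have hY2 : MemLp Y 2 μ := h2.indicator hF
  have hZ2 : MemLp Z 2 μ := h2.indicator hF.compl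
  have iX₁ : Integrable X₁ μ := h1.integrable one_le_two
  have iX₂ : Integrable X₂ μ := h2.integrable one_le_two
  have iY : Integrable Y μ := hY2.integrable one_le_two
  have iZ : Integrable Z μ := hZ2.integrable one_le_two
  have iX₁Y : Integrable (fun ω => X₁ ω * Y ω) μ :=
    memLp_one_iff_integrable.mp (hY2.smul h1 (r := 1) (hpqr := ⟨by simpa [one_div] using aux_one_div_two.symm⟩))
  have iX₁Z : Integrable (fun ω => X₁ ω * Z ω) μ :=
    memLp_one_iff_integrable.mp (hZ2.smul h1 (r := 1) (hpqr := ⟨by simpa [one_div] using aux_one_div_two.symm⟩))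
  have hsum : ∀ ω, X₂ ω = Y ω + Z ω := by
    intro ω
    have := congrFun (Set.indicator_self_add_compl F X₂) ω
    simpa [Y, Z] using this.symm
  have hmulsum : (∫ ω, X₁ ω * X₂ ω ∂μ) = (∫ ω, X₁ ω * Y ω ∂μ) + ∫ ω, X₁ ω * Z ω ∂μ := by
    rw [← integral_add iX₁Y iX₁Z]
    refine integral_congr_ae (Filter.Eventually.of_forall fun ω => ?_)
    dsimp only; rw [hsum ω]; ring
  have hX₂sum : (∫ ω, X₂ ω ∂μ) = (∫ ω, Y ω ∂μ) + ∫ ω, Z ω ∂μ := by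
    rw [← integral_add iY iZ]
    exact integral_congr_ae (Filter.Eventually.of_forall fun ω => hsum ω)
  have hind : (∫ ω, X₁ ω * Y ω ∂μ) = (∫ ω, X₁ ω ∂μ) * ∫ ω, Y ω ∂μ :=
    hindep.integral_mul_eq_mul_integral h1.aestronglyMeasurable hY2.aestronglyMeasurable
  have key : (∫ ω, X₁ ω * X₂ ω ∂μ) - (∫ ω, X₁ ω ∂μ) * (∫ ω, X₂ ω ∂μ)
      = (∫ ω, X₁ ω * Z ω ∂μ) - (∫ ω, X₁ ω ∂μ) * (∫ ω, Z ω ∂μ) := by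
    rw [hmulsum, hX₂sum, hind]; ring
  refine ⟨key, fun h4 => ?_⟩
  rw [key]
  set m₁ : ℝ := ∫ ω, X₁ ω ∂μ with hm₁
  -- covariance as centered integral
  have hcent : (∫ ω, X₁ ω * Z ω ∂μ) - m₁ * (∫ ω, Z ω ∂μ)
      = ∫ ω, (X₁ ω - m₁) * Z ω ∂μ := by
    rw [show (fun ω => (X₁ ω - m₁) * Z ω) = fun ω => X₁ ω * Z ω - m₁ * Z ω by
      funext ω; ring, integral_sub iX₁Z (iZ.const_mul m₁), integral_const_mul]
  have hX₁c : MemLp (fun ω => X₁ ω - m₁) 2 μ := h1.sub (memLp_const m₁)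
  -- Hölder 1
  have hconj : Real.HolderConjugate 2 2 := Real.holderConjugate_iff.mpr ⟨one_lt_two, by norm_num⟩
  have hof2 : ENNReal.ofReal (2:ℝ) = 2 := by norm_num
  have holder1 : (∫ ω, |X₁ ω - m₁| * |Z ω| ∂μ)
      ≤ (∫ ω, |X₁ ω - m₁| ^ (2:ℝ) ∂μ) ^ ((1:ℝ)/2) * (∫ ω, |Z ω| ^ (2:ℝ) ∂μ) ^ ((1:ℝ)/2) := by
    refine integral_mul_le_Lp_mul_Lq_of_nonneg hconj
      (Filter.Eventually.of_forall fun ω => abs_nonneg _)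
      (Filter.Eventually.of_forall fun ω => abs_nonneg _) ?_ ?_
    · rw [hof2]; exact hX₁c.abs
    · rw [hof2]; exact hZ2.abs
  -- identify first factor with sqrt of variance
  have hvar : (∫ ω, |X₁ ω - m₁| ^ (2:ℝ) ∂μ) = variance X₁ μ := by
    rw [variance_eq_integral h1.aemeasurable]
    refine integral_congr_ae (Filter.Eventually.of_forall fun ω => ?_)
    dsimp only [Pi.pow_apply, Pi.sub_apply]
    rw [show |X₁ ω - m₁| ^ (2:ℝ) = |X₁ ω - m₁| ^ (2:ℕ) by
      rw [← Real.rpow_natCast]; norm_num]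
    simp [sq_abs, hm₁]
  -- Hölder 2
  have hX₂sq : MemLp (fun ω => (X₂ ω) ^ 2) 2 μ := by
    have := h4.smul h4 (r := 2) (hpqr := ⟨by simpa [one_div] using aux_half_quarters.symm⟩)
    convert this using 1
    funext ω; simp [sq, Y, Z]
  have hind1 : MemLp (Fᶜ.indicator (fun _ => (1:ℝ))) 2 μ :=
    (memLp_const 1).indicator hF.compl
  have holder2 : (∫ ω, (X₂ ω) ^ 2 * Fᶜ.indicator (fun _ => (1:ℝ)) ω ∂μ)
      ≤ (∫ ω, ((X₂ ω) ^ 2) ^ (2:ℝ) ∂μ) ^ ((1:ℝ)/2)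
        * (∫ ω, (Fᶜ.indicator (fun _ => (1:ℝ)) ω) ^ (2:ℝ) ∂μ) ^ ((1:ℝ)/2) := by
    refine integral_mul_le_Lp_mul_Lq_of_nonneg hconj
      (Filter.Eventually.of_forall fun ω => sq_nonneg _)
      (Filter.Eventually.of_forall fun ω => Set.indicator_nonneg (fun _ _ => zero_le_one) ω)
      ?_ ?_
    · rw [hof2]; exact hX₂sq
    · rw [hof2]; exact hind1
  have hZsq_eq : (∫ ω, |Z ω| ^ (2:ℝ) ∂μ)
      = ∫ ω, (X₂ ω) ^ 2 * Fᶜ.indicator (fun _ => (1:ℝ)) ω ∂μ := by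
    refine integral_congr_ae (Filter.Eventually.of_forall fun ω => ?_)
    dsimp only
    rw [show |Z ω| ^ (2:ℝ) = |Z ω| ^ (2:ℕ) by rw [← Real.rpow_natCast]; norm_num]
    by_cases hω : ω ∈ Fᶜ
    · simp [Z, Set.indicator_of_mem hω, sq_abs]
    · simp [Z, Set.indicator_of_notMem hω]
  have hpow4 : (∫ ω, ((X₂ ω) ^ 2) ^ (2:ℝ) ∂μ) = ∫ ω, (X₂ ω) ^ 4 ∂μ := by
    refine integral_congr_ae (Filter.Eventually.of_forall fun ω => ?_)
    dsimp only
    rw [show ((X₂ ω) ^ 2) ^ (2:ℝ) = ((X₂ ω) ^ 2) ^ (2:ℕ) by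
      rw [← Real.rpow_natCast]; norm_num]
    ring
  have hindint : (∫ ω, (Fᶜ.indicator (fun _ => (1:ℝ)) ω) ^ (2:ℝ) ∂μ) = (μ Fᶜ).toReal := by
    have : ∀ ω, (Fᶜ.indicator (fun _ => (1:ℝ)) ω) ^ (2:ℝ)
        = Fᶜ.indicator (fun _ => (1:ℝ)) ω := by
      intro ω
      by_cases hω : ω ∈ Fᶜ
      · simp [Set.indicator_of_mem hω]
      · simp [Set.indicator_of_notMem hω, Real.zero_rpow (by norm_num : (2:ℝ) ≠ 0)]
    rw [integral_congr_ae (Filter.Eventually.of_forall this),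
      integral_indicator_const (1:ℝ) hF.compl]
    simp [measureReal_def]
  -- nonnegativity facts
  have hC : (0:ℝ) ≤ ∫ ω, (X₂ ω) ^ 4 ∂μ := by
    refine integral_nonneg fun ω => ?_
    positivity
  have hD : (0:ℝ) ≤ (μ Fᶜ).toReal := ENNReal.toReal_nonneg
  have hV : (0:ℝ) ≤ variance X₁ μ := variance_nonneg _ _
  -- chain of bounds
  have step1 : |∫ ω, (X₁ ω - m₁) * Z ω ∂μ| ≤ ∫ ω, |X₁ ω - m₁| * |Z ω| ∂μ := by
    simpa [Real.norm_eq_abs, abs_mul] using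
      norm_integral_le_integral_norm (μ := μ) (fun ω => (X₁ ω - m₁) * Z ω)
  have hZnn : (0:ℝ) ≤ ∫ ω, |Z ω| ^ (2:ℝ) ∂μ := by
    refine integral_nonneg fun ω => ?_
    positivity
  have step2 : (∫ ω, |Z ω| ^ (2:ℝ) ∂μ) ^ ((1:ℝ)/2)
      ≤ ((∫ ω, (X₂ ω) ^ 4 ∂μ) ^ ((1:ℝ)/2) * ((μ Fᶜ).toReal) ^ ((1:ℝ)/2)) ^ ((1:ℝ)/2) := by
    apply Real.rpow_le_rpow hZnn _ (by norm_num)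
    rw [hZsq_eq]
    calc (∫ ω, (X₂ ω) ^ 2 * Fᶜ.indicator (fun _ => (1:ℝ)) ω ∂μ)
        ≤ (∫ ω, ((X₂ ω) ^ 2) ^ (2:ℝ) ∂μ) ^ ((1:ℝ)/2)
          * (∫ ω, (Fᶜ.indicator (fun _ => (1:ℝ)) ω) ^ (2:ℝ) ∂μ) ^ ((1:ℝ)/2) := holder2
      _ = (∫ ω, (X₂ ω) ^ 4 ∂μ) ^ ((1:ℝ)/2) * ((μ Fᶜ).toReal) ^ ((1:ℝ)/2) := by
          rw [hpow4, hindint]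
  have step3 : ((∫ ω, (X₂ ω) ^ 4 ∂μ) ^ ((1:ℝ)/2) * ((μ Fᶜ).toReal) ^ ((1:ℝ)/2)) ^ ((1:ℝ)/2)
      = (∫ ω, (X₂ ω) ^ 4 ∂μ) ^ ((1:ℝ)/4) * ((μ Fᶜ).toReal) ^ ((1:ℝ)/4) := by
    rw [Real.mul_rpow (Real.rpow_nonneg hC _) (Real.rpow_nonneg hD _),
      ← Real.rpow_mul hC, ← Real.rpow_mul hD]
    norm_num
  calc |(∫ ω, X₁ ω * Z ω ∂μ) - m₁ * ∫ ω, Z ω ∂μ|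
      = |∫ ω, (X₁ ω - m₁) * Z ω ∂μ| := by rw [hcent]
    _ ≤ ∫ ω, |X₁ ω - m₁| * |Z ω| ∂μ := step1
    _ ≤ (∫ ω, |X₁ ω - m₁| ^ (2:ℝ) ∂μ) ^ ((1:ℝ)/2) * (∫ ω, |Z ω| ^ (2:ℝ) ∂μ) ^ ((1:ℝ)/2) :=
        holder1
    _ = Real.sqrt (variance X₁ μ) * (∫ ω, |Z ω| ^ (2:ℝ) ∂μ) ^ ((1:ℝ)/2) := by
        rw [hvar, Real.sqrt_eq_rpow]
    _ ≤ Real.sqrt (variance X₁ μ)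
        * ((∫ ω, (X₂ ω) ^ 4 ∂μ) ^ ((1:ℝ)/2) * ((μ Fᶜ).toReal) ^ ((1:ℝ)/2)) ^ ((1:ℝ)/2) := by
        exact mul_le_mul_of_nonneg_left step2 (Real.sqrt_nonneg _)
    _ = Real.sqrt (variance X₁ μ) * (∫ ω, (X₂ ω) ^ 4 ∂μ) ^ ((1:ℝ)/4)
        * ((μ Fᶜ).toReal) ^ ((1:ℝ)/4) := by rw [step3, mul_assoc]
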